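/- For every nonnegative integer n, every positive integer α, and every fixed x ≠ 0 (q real, q → 1 from below), lim_{q→1⁻} ∂_q G_{n,q}^{(α)}(x) = n · G_{n-1}^{(α)}(x), where G_m^{(α)}(x) are the ordinary higher-order Genocchi polynomials defined by Σ_{m≥0} G_m^{(α)}(x) t^m/m! = (2t/(e^t+1))^α e^{xt}. -/

import Mathlib

open PowerSeries Finset Filter Topology

/-- The `q`-number `[n]_q = (1 - q^n)/(1 - q)` (real `q`). -/
noncomputable def qNumR (q : ℝ) (n : ℕ) : ℝ := (1 - q ^ n) / (1 - q)

/-- The `q`-factorial `[n]_q! = [n]_q [n-1]_q ⋯ [1]_q`, with `[0]_q! = 1` (real `q`). -/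
noncomputable def qFactR (q : ℝ) : ℕ → ℝ
  | 0 => 1
  | n + 1 => qNumR q (n + 1) * qFactR q n

/-- The Gaussian `q`-binomial coefficient `[n]_q! / ([k]_q! [n-k]_q!)` (real `q`). -/
noncomputable def qBinomR (q : ℝ) (n k : ℕ) : ℝ :=
  qFactR q n / (qFactR q k * qFactR q (n - k))

/-- `e_q(zx)` as a formal power series in `z`: `∑ x^l z^l / [l]_q!` (real `q`). -/
noncomputable def qExpGFR (q x : ℝ) : PowerSeries ℝ :=
  PowerSeries.mk fun l => x ^ l / qFactR q l

/-- The generating function `([2]_q z/(e_q(z)+1))^α e_q(zx)` of the higher-order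
`q`-Genocchi polynomials, as a formal power series in `z` (real `q`). -/
noncomputable def qGenocchiGFR (q : ℝ) (α : ℕ) (x : ℝ) : PowerSeries ℝ :=
  (PowerSeries.C (qNumR q 2) * PowerSeries.X * (qExpGFR q 1 + 1)⁻¹) ^ α * qExpGFR q x

/-- `e^{xt}` as a formal power series in `t` over `ℝ`. -/
noncomputable def expGFR (x : ℝ) : PowerSeries ℝ :=
  PowerSeries.mk fun n => x ^ n / n.factorial

/-- The generating function `(2t/(e^t+1))^α e^{xt}` of the ordinary higher-order
Genocchi polynomials, as a formal power series in `t`. -/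
noncomputable def genocchiGFR (α : ℕ) (x : ℝ) : PowerSeries ℝ :=
  (PowerSeries.C (2 : ℝ) * PowerSeries.X * (expGFR 1 + 1)⁻¹) ^ α * expGFR x

/-! ### Auxiliary lemmas -/

lemma coeff_qExpGFR (q y : ℝ) (l : ℕ) :
    (PowerSeries.coeff l) (qExpGFR q y) = y ^ l / qFactR q l := coeff_mk _ _

lemma coeff_expGFR (y : ℝ) (l : ℕ) :
    (PowerSeries.coeff l) (expGFR y) = y ^ l / l.factorial := coeff_mk _ _

lemma ev_mem : ∀ᶠ q in 𝓝[<] (1:ℝ), q ∈ Set.Ioo (0:ℝ) 1 :=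
  Ioo_mem_nhdsLT_of_mem (by constructor <;> norm_num)

lemma tendsto_geomsum (k : ℕ) :
    Tendsto (fun q : ℝ => ∑ i ∈ range k, q ^ i) (𝓝[<] (1:ℝ)) (𝓝 (k : ℝ)) := by
  have hc : Continuous (fun q : ℝ => ∑ i ∈ range k, q ^ i) := by continuity
  have := hc.tendsto (1 : ℝ)
  simp only [one_pow, sum_const, card_range, nsmul_eq_mul, mul_one] at this
  exact this.mono_left nhdsWithin_le_nhds

lemma tendsto_qNumR (k : ℕ) :
    Tendsto (fun q => qNumR q k) (𝓝[<] (1:ℝ)) (𝓝 (k : ℝ)) := by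
  refine (tendsto_geomsum k).congr' ?_
  filter_upwards [self_mem_nhdsWithin] with q hq
  have hq1 : q - 1 ≠ 0 := sub_ne_zero.mpr (ne_of_lt hq)
  have hg := geom_sum_mul q k
  have h : qNumR q k = (q ^ k - 1) / (q - 1) := by
    rw [qNumR, ← neg_div_neg_eq]; ring_nf
  rw [h, eq_div_iff hq1]
  exact hg

lemma qNumR_pos {q : ℝ} (hq : q ∈ Set.Ioo (0:ℝ) 1) (k : ℕ) (hk : k ≠ 0) :
    0 < qNumR q k := by
  have h1 : q ^ k < 1 := pow_lt_one₀ hq.1.le hq.2 hk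
  exact div_pos (by linarith) (by linarith [hq.2])

lemma qFactR_pos {q : ℝ} (hq : q ∈ Set.Ioo (0:ℝ) 1) (n : ℕ) : 0 < qFactR q n := by
  induction n with
  | zero => norm_num [qFactR]
  | succ m ih => exact mul_pos (qNumR_pos hq (m+1) (Nat.succ_ne_zero m)) ih

lemma qFactR_ne_zero {q : ℝ} (hq : q ∈ Set.Ioo (0:ℝ) 1) (n : ℕ) : qFactR q n ≠ 0 :=
  (qFactR_pos hq n).ne'

lemma tendsto_qFactR (n : ℕ) :
    Tendsto (fun q => qFactR q n) (𝓝[<] (1:ℝ)) (𝓝 (n.factorial : ℝ)) := by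
  induction n with
  | zero => simp only [qFactR, Nat.factorial_zero, Nat.cast_one]; exact tendsto_const_nhds
  | succ m ih =>
      have h := (tendsto_qNumR (m+1)).mul ih
      simp only [qFactR, Nat.factorial_succ, Nat.cast_mul]
      convert h using 2

/-- Coefficient-wise convergence of a family of power series as `q → 1⁻`. -/
def CT (F : ℝ → PowerSeries ℝ) (f : PowerSeries ℝ) : Prop :=
  ∀ m : ℕ, Tendsto (fun q => (PowerSeries.coeff m) (F q)) (𝓝[<] (1:ℝ))
    (𝓝 ((PowerSeries.coeff m) f))

lemma CT_const (f : PowerSeries ℝ) : CT (fun _ => f) f := fun _ => tendsto_const_nhds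

lemma CT.mul {F G f g} (hF : CT F f) (hG : CT G g) : CT (fun q => F q * G q) (f * g) := by
  intro m
  simp only [coeff_mul]
  exact tendsto_finset_sum _ fun p _ => (hF p.1).mul (hG p.2)

lemma CT.pow {F f} (hF : CT F f) (α : ℕ) : CT (fun q => (F q) ^ α) (f ^ α) := by
  induction α with
  | zero => simpa using CT_const 1
  | succ a ih => simpa only [pow_succ] using ih.mul hF

lemma CT.add {F G f g} (hF : CT F f) (hG : CT G g) : CT (fun q => F q + G q) (f + g) := by
  intro m
  simpa only [map_add] using (hF m).add (hG m)

lemma CT.inv {F f} (hF : CT F f) (h0 : constantCoeff f ≠ 0) :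
    CT (fun q => (F q)⁻¹) f⁻¹ := by
  have hc : Tendsto (fun q => (constantCoeff (F q))⁻¹) (𝓝[<] (1:ℝ))
      (𝓝 ((constantCoeff f)⁻¹)) := by
    have h := hF 0
    simp only [coeff_zero_eq_constantCoeff] at h
    exact h.inv₀ h0
  intro m
  induction m using Nat.strong_induction_on with
  | _ m ih =>
    rcases eq_or_ne m 0 with hm | hm
    · simp only [coeff_inv m, if_pos hm]
      exact hc
    · simp only [coeff_inv m, if_neg hm]
      refine hc.neg.mul (tendsto_finset_sum _ fun p _ => ?_)
      by_cases hp : p.2 < m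
      · simp only [if_pos hp]
        exact (hF p.1).mul (ih p.2 hp)
      · simp only [if_neg hp]
        exact tendsto_const_nhds

lemma CT_qExp (x : ℝ) : CT (fun q => qExpGFR q x) (expGFR x) := by
  intro m
  simp only [qExpGFR, expGFR, coeff_mk]
  exact tendsto_const_nhds.div (tendsto_qFactR m)
    (by exact_mod_cast Nat.factorial_ne_zero m)

lemma CT_C : CT (fun q => PowerSeries.C (qNumR q 2)) (PowerSeries.C (2 : ℝ)) := by
  intro m
  rcases eq_or_ne m 0 with hm | hm
  · subst hm
    simp only [coeff_zero_C]
    have h := tendsto_qNumR 2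
    norm_num at h
    exact h
  · simp only [coeff_C, if_neg hm]
    exact tendsto_const_nhds

lemma constCoeff_exp_add_one : constantCoeff (expGFR 1 + 1) ≠ 0 := by
  have h : constantCoeff (expGFR 1) = 1 := by
    simp [expGFR, ← coeff_zero_eq_constantCoeff]
  simp [h]

lemma CT_base (α : ℕ) :
    CT (fun q => (PowerSeries.C (qNumR q 2) * PowerSeries.X * (qExpGFR q 1 + 1)⁻¹) ^ α)
      ((PowerSeries.C (2 : ℝ) * PowerSeries.X * (expGFR 1 + 1)⁻¹) ^ α) :=
  ((CT_C.mul (CT_const _)).mul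
    (((CT_qExp 1).add (CT_const 1)).inv constCoeff_exp_add_one)).pow α

lemma tendsto_rubin_pow (x : ℝ) (hx : x ≠ 0) (j : ℕ) :
    Tendsto (fun q : ℝ =>
      ((q⁻¹*x)^j + (-(q⁻¹*x))^j - (q*x)^j + (-(q*x))^j - 2*(-x)^j) / (2*(1-q)*x))
      (𝓝[<] (1:ℝ)) (𝓝 ((j:ℝ) * x^(j-1))) := by
  rcases Nat.eq_zero_or_pos j with hj | hj
  · subst hj
    simp only [pow_zero, Nat.cast_zero, zero_mul]
    norm_num
  obtain ⟨j', rfl⟩ : ∃ j', j = j' + 1 := ⟨j - 1, by omega⟩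
  have h2 : ∀ q ∈ Set.Ioo (0:ℝ) 1, (2:ℝ)*(1-q)*x ≠ 0 := by
    intro q hq
    have h1q : (1:ℝ) - q ≠ 0 := sub_ne_zero.mpr (ne_of_gt hq.2)
    exact mul_ne_zero (mul_ne_zero two_ne_zero h1q) hx
  rcases Nat.even_or_odd (j' + 1) with hpar | hpar
  · have hlim : Tendsto (fun q : ℝ => (q⁻¹)^(j'+1) * x^j' * ∑ i ∈ range (j'+1), q^i)
        (𝓝[<] (1:ℝ)) (𝓝 ((j'+1 : ℕ) * x ^ j')) := by
      have h1 : Tendsto (fun q : ℝ => (q⁻¹)^(j'+1)) (𝓝[<] (1:ℝ)) (𝓝 1) := by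
        have h := ((tendsto_id.inv₀ (one_ne_zero)).pow (j'+1) :
          Tendsto (fun q : ℝ => (q⁻¹)^(j'+1)) (𝓝 1) (𝓝 ((1:ℝ)⁻¹ ^ (j'+1))))
        simpa using h.mono_left nhdsWithin_le_nhds
      have h3 := (h1.mul (tendsto_const_nhds (x := x^j'))).mul (tendsto_geomsum (j'+1))
      simpa [mul_comm] using h3
    refine Tendsto.congr' ?_ (by simpa using hlim)
    filter_upwards [ev_mem] with q hq
    have hq0 : q ≠ 0 := hq.1.ne'
    have hd := h2 q hq
    have hgs : (∑ i ∈ range (j'+1), q^i) * (q-1) = q^(j'+1) - 1 := geom_sum_mul q (j'+1)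
    have hpow : (q⁻¹)^(j'+1) * q^(j'+1) = 1 := by
      rw [← mul_pow, inv_mul_cancel₀ hq0, one_pow]
    rw [hpar.neg_pow, hpar.neg_pow, hpar.neg_pow, eq_div_iff hd]
    linear_combination (-2 * x^(j'+1) * (q⁻¹)^(j'+1)) * hgs + (-2 * x^(j'+1)) * hpow
  · have hlim : Tendsto (fun q : ℝ => x^j' * ∑ i ∈ range (j'+1), q^i)
        (𝓝[<] (1:ℝ)) (𝓝 ((j'+1 : ℕ) * x ^ j')) := by
      have h3 := (tendsto_const_nhds (x := x^j')).mul (tendsto_geomsum (j'+1))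
      simpa [mul_comm] using h3
    refine Tendsto.congr' ?_ (by simpa using hlim)
    filter_upwards [ev_mem] with q hq
    have hd := h2 q hq
    have hgs : (∑ i ∈ range (j'+1), q^i) * (q-1) = q^(j'+1) - 1 := geom_sum_mul q (j'+1)
    rw [hpar.neg_pow, hpar.neg_pow, hpar.neg_pow, eq_div_iff hd]
    linear_combination (-2 * x^(j'+1)) * hgs

/-- For fixed `x ≠ 0`, as `q → 1⁻` Rubin's `q`-differential operator applied to the
higher-order `q`-Genocchi polynomial tends to `n ⬝ G_{n-1}^{(α)}(x)`, where
`G_m^{(α)}` are the ordinary higher-order Genocchi polynomials. -/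
theorem rubin_qDeriv_qGenocchi_tendsto (α : ℕ) (hα : 0 < α)
    (G : ℝ → ℕ → ℝ → ℝ)
    (hG : ∀ q ∈ Set.Ioo (0 : ℝ) 1, ∀ x : ℝ,
      PowerSeries.mk (fun n => G q n x / qFactR q n) = qGenocchiGFR q α x)
    (H : ℕ → ℝ → ℝ)
    (hH : ∀ x : ℝ,
      PowerSeries.mk (fun m => H m x / m.factorial) = genocchiGFR α x)
    (n : ℕ) (x : ℝ) (hx : x ≠ 0) :
    Filter.Tendsto
      (fun q : ℝ =>
        (G q n (q⁻¹ * x) + G q n (-(q⁻¹ * x)) - G q n (q * x) + G q n (-(q * x)) -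
            2 * G q n (-x)) / (2 * (1 - q) * x))
      (𝓝[<] (1 : ℝ)) (𝓝 ((n : ℝ) * H (n - 1) x)) := by
  classical
  set B : ℕ → ℝ := fun i =>
    (PowerSeries.coeff i) ((PowerSeries.C (2 : ℝ) * PowerSeries.X * (expGFR 1 + 1)⁻¹) ^ α)
    with hBdef
  -- explicit form of G
  have hGval : ∀ q ∈ Set.Ioo (0:ℝ) 1, ∀ y : ℝ,
      G q n y = qFactR q n * ∑ p ∈ antidiagonal n,
        (PowerSeries.coeff p.1)
            ((PowerSeries.C (qNumR q 2) * PowerSeries.X * (qExpGFR q 1 + 1)⁻¹) ^ α)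
          * (y ^ p.2 / qFactR q p.2) := by
    intro q hq y
    have h := congrArg (PowerSeries.coeff n) (hG q hq y)
    rw [coeff_mk, qGenocchiGFR, coeff_mul] at h
    simp only [coeff_qExpGFR] at h
    rw [div_eq_iff (qFactR_ne_zero hq n)] at h
    rw [h, mul_comm]
  -- explicit form of H
  have hHval : H (n-1) x = ((n-1).factorial : ℝ) *
      ∑ p ∈ antidiagonal (n-1), B p.1 * (x ^ p.2 / p.2.factorial) := by
    have h := congrArg (PowerSeries.coeff (n-1)) (hH x)
    rw [coeff_mk, genocchiGFR, coeff_mul] at h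
    simp only [coeff_expGFR] at h
    rw [div_eq_iff (Nat.cast_ne_zero.mpr (Nat.factorial_ne_zero (n-1)))] at h
    rw [h, mul_comm]
  -- the limit of the surrogate function
  have hFlim : Tendsto (fun q : ℝ => qFactR q n * ∑ p ∈ antidiagonal n,
      (PowerSeries.coeff p.1)
          ((PowerSeries.C (qNumR q 2) * PowerSeries.X * (qExpGFR q 1 + 1)⁻¹) ^ α)
        / qFactR q p.2 *
        (((q⁻¹*x)^p.2 + (-(q⁻¹*x))^p.2 - (q*x)^p.2 + (-(q*x))^p.2 - 2*(-x)^p.2)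
          / (2*(1-q)*x)))
      (𝓝[<] (1:ℝ))
      (𝓝 ((n.factorial : ℝ) * ∑ p ∈ antidiagonal n,
        B p.1 / (p.2.factorial : ℝ) * ((p.2:ℝ) * x^(p.2-1)))) :=
    (tendsto_qFactR n).mul (tendsto_finset_sum _ fun p _ =>
      (((CT_base α) p.1).div (tendsto_qFactR p.2)
          (Nat.cast_ne_zero.mpr (Nat.factorial_ne_zero _))).mul
        (tendsto_rubin_pow x hx p.2))
  -- identify the limit value
  have hL : (n.factorial : ℝ) * ∑ p ∈ antidiagonal n,
      B p.1 / (p.2.factorial : ℝ) * ((p.2:ℝ) * x^(p.2-1))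
      = (n : ℝ) * H (n-1) x := by
    rw [hHval]
    rcases n with _ | m
    · simp
    · rw [Finset.Nat.sum_antidiagonal_eq_sum_range_succ_mk,
        Finset.Nat.sum_antidiagonal_eq_sum_range_succ_mk, Finset.sum_range_succ]
      simp only [Nat.sub_self, Nat.cast_zero, zero_mul, mul_zero, add_zero]
      rw [Finset.mul_sum, Finset.mul_sum, Finset.mul_sum]
      refine Finset.sum_congr rfl fun k hk => ?_
      rw [Finset.mem_range] at hk
      obtain ⟨d, hd⟩ : ∃ d, m - k = d := ⟨m - k, rfl⟩
      have h1 : m + 1 - k = d + 1 := by omega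
      have h2 : m + 1 - k - 1 = d := by omega
      have h3 : m + 1 - 1 - k = d := by omega
      rw [h2, h1, h3]
      have hfd : (d.factorial : ℝ) ≠ 0 := Nat.cast_ne_zero.mpr (Nat.factorial_ne_zero d)
      rw [Nat.factorial_succ, Nat.factorial_succ]
      push_cast
      field_simp
  rw [← hL]
  refine Tendsto.congr' ?_ hFlim
  filter_upwards [ev_mem] with q hq
  have hd : (2:ℝ)*(1-q)*x ≠ 0 :=
    mul_ne_zero (mul_ne_zero two_ne_zero (sub_ne_zero.mpr (ne_of_gt hq.2))) hx
  rw [hGval q hq (q⁻¹*x), hGval q hq (-(q⁻¹*x)), hGval q hq (q*x), hGval q hq (-(q*x)),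
    hGval q hq (-x), eq_div_iff hd]
  simp only [Finset.mul_sum, Finset.sum_mul]
  rw [← Finset.sum_add_distrib, ← Finset.sum_sub_distrib, ← Finset.sum_add_distrib,
    ← Finset.sum_sub_distrib]
  refine Finset.sum_congr rfl fun p _ => ?_
  have hf := qFactR_ne_zero hq p.2
  have h1q : (1:ℝ) - q ≠ 0 := sub_ne_zero.mpr (ne_of_gt hq.2)
  generalize (-(q⁻¹ * x)) ^ p.2 = a2
  generalize (-(q * x)) ^ p.2 = a4
  generalize (-x) ^ p.2 = a5
  generalize (q⁻¹ * x) ^ p.2 = a1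
  generalize (q * x) ^ p.2 = a3
  field_simp
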